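/- Every monomial r^γ s^δ appearing with nonzero coefficient in a_m satisfies γ + δ ≡ m (mod 2); every monomial in b_m satisfies γ + δ ≡ m + 1 (mod 2); and every monomial in c_m satisfies γ + δ ≡ m (mod 2), where a_m, b_m, c_m are defined by a_2 = 1, b_2 = s − s^{−1}, c_2 = −r^{−1}(s − s^{−1}), a_{m+1} = b_m, b_{m+1} = a_m + (s−s^{−1})b_m, c_{m+1} = r^{−1}(c_m − (s−s^{−1})b_m). -/

import Mathlib

/-- The ring of Laurent polynomials `ℤ[r, r^{−1}, s, s^{−1}]`, realized as the group
algebra of `ℤ × ℤ` over `ℤ`; the monomial `r^γ s^δ` corresponds to `single (γ, δ) 1`. -/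
abbrev LaurentZ : Type := AddMonoidAlgebra ℤ (ℤ × ℤ)

/-- The variable `r`. -/
noncomputable def rL : LaurentZ := AddMonoidAlgebra.single (1, 0) 1

/-- `r^{−1}`. -/
noncomputable def rLinv : LaurentZ := AddMonoidAlgebra.single (-1, 0) 1

/-- The variable `s`. -/
noncomputable def sL : LaurentZ := AddMonoidAlgebra.single (0, 1) 1

/-- `s^{−1}`. -/
noncomputable def sLinv : LaurentZ := AddMonoidAlgebra.single (0, -1) 1

/-- Auxiliary: `(a_{m+2}, b_{m+2}, c_{m+2})` for the BWM power recursion,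
with `a_2 = 1`, `b_2 = s − s^{−1}`, `c_2 = −r^{−1}(s − s^{−1})`,
`a_{m+1} = b_m`, `b_{m+1} = a_m + (s−s^{−1})b_m`, `c_{m+1} = r^{−1}(c_m − (s−s^{−1})b_m)`. -/
noncomputable def abcL : ℕ → LaurentZ × LaurentZ × LaurentZ
  | 0 => (1, sL - sLinv, -(rLinv * (sL - sLinv)))
  | n + 1 =>
    let p := abcL n
    (p.2.1, p.1 + (sL - sLinv) * p.2.1, rLinv * (p.2.2 - (sL - sLinv) * p.2.1))

/-- `a_m` for `m ≥ 2`. -/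
noncomputable def aL (m : ℕ) : LaurentZ := (abcL (m - 2)).1

/-- `b_m` for `m ≥ 2`. -/
noncomputable def bL (m : ℕ) : LaurentZ := (abcL (m - 2)).2.1

/-- `c_m` for `m ≥ 2`. -/
noncomputable def cL (m : ℕ) : LaurentZ := (abcL (m - 2)).2.2


private def Par (e : ℤ) (f : LaurentZ) : Prop := ∀ p ∈ f.coeff.support, (p.1 + p.2) % 2 = e % 2

private theorem Par_congr {e e' : ℤ} {f : LaurentZ} (h : e % 2 = e' % 2) (hf : Par e f) :
    Par e' f := fun p hp => (hf p hp).trans h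

private theorem Par_single (e : ℤ) (pt : ℤ × ℤ) (c : ℤ) (h : (pt.1 + pt.2) % 2 = e % 2) :
    Par e (AddMonoidAlgebra.single pt c) := by
  intro p hp
  rw [AddMonoidAlgebra.coeff_single] at hp
  have := Finsupp.support_single_subset hp
  simp at this
  subst this; exact h

private theorem Par_one : Par 0 (1 : LaurentZ) := by
  rw [AddMonoidAlgebra.one_def]; exact Par_single 0 (0, 0) 1 (by norm_num)

private theorem Par_add {e : ℤ} {f g : LaurentZ} (hf : Par e f) (hg : Par e g) :
    Par e (f + g) := by
  intro p hp
  rw [AddMonoidAlgebra.coeff_add] at hp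
  rcases Finset.mem_union.mp (Finsupp.support_add hp) with h | h
  · exact hf p h
  · exact hg p h

private theorem Par_neg {e : ℤ} {f : LaurentZ} (hf : Par e f) : Par e (-f) := by
  intro p hp
  rw [AddMonoidAlgebra.coeff_neg, Finsupp.support_neg] at hp
  exact hf p hp

private theorem Par_sub {e : ℤ} {f g : LaurentZ} (hf : Par e f) (hg : Par e g) :
    Par e (f - g) := by
  rw [sub_eq_add_neg]; exact Par_add hf (Par_neg hg)

private theorem Par_mul {e e' : ℤ} {f g : LaurentZ} (hf : Par e f) (hg : Par e' g) :
    Par (e + e') (f * g) := by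
  intro p hp
  have := AddMonoidAlgebra.support_coeff_mul_subset f g hp
  rw [Finset.mem_add] at this
  obtain ⟨x, hx, y, hy, rfl⟩ := this
  have h1 := hf x hx
  have h2 := hg y hy
  simp only [Prod.fst_add, Prod.snd_add]
  omega

private theorem Par_t : Par 1 (sL - sLinv) :=
  Par_sub (Par_single 1 (0, 1) 1 (by norm_num)) (Par_single 1 (0, -1) 1 (by norm_num))

private theorem Par_rinv : Par 1 rLinv := Par_single 1 (-1, 0) 1 (by norm_num)

private theorem abc_par (n : ℕ) :
    Par n (abcL n).1 ∧ Par (n + 1) (abcL n).2.1 ∧ Par n (abcL n).2.2 := by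
  induction n with
  | zero =>
    refine ⟨Par_one, ?_, ?_⟩
    · simpa [abcL] using Par_t
    · simpa [abcL] using Par_neg (Par_congr (by norm_num) (Par_mul Par_rinv Par_t))
  | succ n ih =>
    obtain ⟨ha, hb, hc⟩ := ih
    refine ⟨by simpa [abcL] using hb, ?_, ?_⟩
    · show Par _ ((abcL n).1 + (sL - sLinv) * (abcL n).2.1)
      push_cast
      exact Par_add (Par_congr (by omega) ha)
        (Par_congr (by omega) (Par_mul Par_t hb))
    · show Par _ (rLinv * ((abcL n).2.2 - (sL - sLinv) * (abcL n).2.1))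
      push_cast
      exact Par_congr (by omega)
        (Par_mul Par_rinv (Par_sub hc (Par_congr (by omega) (Par_mul Par_t hb))))

/-- Every monomial `r^γ s^δ` occurring in `a_m` has `γ + δ ≡ m (mod 2)`; every monomial
in `b_m` has `γ + δ ≡ m + 1 (mod 2)`; every monomial in `c_m` has `γ + δ ≡ m (mod 2)`. -/
theorem abc_monomial_parity (m : ℕ) (hm : 2 ≤ m) :
    (∀ γ δ : ℤ, (aL m).coeff (γ, δ) ≠ 0 → (γ + δ) % 2 = (m : ℤ) % 2) ∧
    (∀ γ δ : ℤ, (bL m).coeff (γ, δ) ≠ 0 → (γ + δ) % 2 = ((m : ℤ) + 1) % 2) ∧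
    (∀ γ δ : ℤ, (cL m).coeff (γ, δ) ≠ 0 → (γ + δ) % 2 = (m : ℤ) % 2) := by
  obtain ⟨ha, hb, hc⟩ := abc_par (m - 2)
  have hcast : ((m - 2 : ℕ) : ℤ) = (m : ℤ) - 2 := by
    have : 2 ≤ m := hm; omega
  refine ⟨fun γ δ h => ?_, fun γ δ h => ?_, fun γ δ h => ?_⟩
  · have := ha (γ, δ) (Finsupp.mem_support_iff.mpr h)
    simpa [hcast] using this.trans (by omega)
  · have := hb (γ, δ) (Finsupp.mem_support_iff.mpr h)
    rw [hcast] at this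
    simpa using this.trans (by omega)
  · have := hc (γ, δ) (Finsupp.mem_support_iff.mpr h)
    simpa [hcast] using this.trans (by omega)
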